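/- Given hypersurface data (h, l, l2) with inverse data (P, n, n2), and first-order perturbations δh (symmetric bilinear form), δl (covector), δl2 (scalar), define δP(ω,χ) = −(P⊗P applied to δh) − terms: explicitly, δP(ω,χ) = −δh(P(ω,·)♯, P(χ,·)♯) − ω(n)·P(χ, δl) − χ(n)·P(ω, δl) − ω(n)χ(n)·δl2; δn ∈ V by ω(δn) = −δh(n, P(ω,·)♯) − n2·ω(n)·δl2 − n2·P(ω, δl) − ω(n)·δl(n); and δn2 = −δh(n,n) − n2·(n2·δl2 + 2·δl(n)). Then these satisfy the linearized compatibility relations: (a) P(ω, δh(X,·)) + δP(ω, h(X,·)) + ω(δn)·l(X) + ω(n)·δl(X) = 0; (b) δP(ω, l) + P(ω, δl) + δl2·ω(n) + l2·ω(δn) = 0; (c) δl(n) + l(δn) + δn2·l2 + n2·δl2 = 0; (d) δh(n, X) + h(δn, X) + δn2·l(X) + n2·δl(X) = 0, for all ω ∈ V*, X ∈ V. -/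
import Mathlib


/-- The explicit formulas for (δP, δn, δn2) satisfy the linearized compatibility
relations (Lemma 4.2 of Nolan–Reina–Sousa, pointwise version). -/
theorem stmt_11
    (V : Type*) [AddCommGroup V] [Module ℝ V] [FiniteDimensional ℝ V]
    (h : V →ₗ[ℝ] V →ₗ[ℝ] ℝ) (hsymm : ∀ X Y : V, h X Y = h Y X)
    (l : Module.Dual ℝ V) (l2 : ℝ)
    (P : Module.Dual ℝ V →ₗ[ℝ] Module.Dual ℝ V →ₗ[ℝ] ℝ)
    (Psymm : ∀ ω χ : Module.Dual ℝ V, P ω χ = P χ ω)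
    (n : V) (n2 : ℝ)
    (c1 : ∀ (ω : Module.Dual ℝ V) (X : V), P ω (h X) + ω n * l X = ω X)
    (c2 : ∀ ω : Module.Dual ℝ V, P ω l + l2 * ω n = 0)
    (c3 : l n + n2 * l2 = 1)
    (c4 : ∀ X : V, h n X + n2 * l X = 0)
    -- the "sharp" of P: χ(P(ω,·)♯) = P(ω,χ)
    (sharpP : Module.Dual ℝ V → V)
    (hsharp : ∀ ω χ : Module.Dual ℝ V, χ (sharpP ω) = P ω χ)
    -- first-order perturbations of the hypersurface metric data:
    (δh : V →ₗ[ℝ] V →ₗ[ℝ] ℝ) (δhsymm : ∀ X Y : V, δh X Y = δh Y X)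
    (δl : Module.Dual ℝ V) (δl2 : ℝ)
    -- δn is the vector characterized by the explicit formula:
    (δn : V)
    (hδn : ∀ ω : Module.Dual ℝ V,
      ω δn = -δh n (sharpP ω) - n2 * ω n * δl2 - n2 * P ω δl - ω n * δl n) :
    let δP : Module.Dual ℝ V → Module.Dual ℝ V → ℝ := fun ω χ =>
      -δh (sharpP ω) (sharpP χ) - ω n * P χ δl - χ n * P ω δl - ω n * χ n * δl2
    let δn2 : ℝ := -δh n n - n2 * (n2 * δl2 + 2 * δl n)
    (∀ (ω : Module.Dual ℝ V) (X : V),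
      P ω (δh X) + δP ω (h X) + ω δn * l X + ω n * δl X = 0) ∧
    (∀ ω : Module.Dual ℝ V, δP ω l + P ω δl + δl2 * ω n + l2 * ω δn = 0) ∧
    (δl n + l δn + δn2 * l2 + n2 * δl2 = 0) ∧
    (∀ X : V, δh n X + h δn X + δn2 * l X + n2 * δl X = 0) := by
  intro δP δn2
  -- characterization of sharpP on h X and on l
  have dual_eq : ∀ a b : V, (∀ χ : Module.Dual ℝ V, χ a = χ b) → a = b := by
    intro a b hab
    have : ∀ χ : Module.Dual ℝ V, χ (a - b) = 0 := by
      intro χ; simp [hab χ]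
    exact sub_eq_zero.mp ((Module.forall_dual_apply_eq_zero_iff ℝ (a - b)).mp this)
  have F1 : ∀ X : V, sharpP (h X) = X - l X • n := by
    intro X
    refine dual_eq _ _ fun χ => ?_
    rw [hsharp, Psymm]
    have := c1 χ X
    simp only [map_sub, map_smul, smul_eq_mul]
    linarith
  have F2 : sharpP l = -l2 • n := by
    refine dual_eq _ _ fun χ => ?_
    rw [hsharp, Psymm]
    have := c2 χ
    simp only [map_smul, smul_eq_mul]
    linarith
  have F4 : ∀ ω : Module.Dual ℝ V, P ω δl = δl (sharpP ω) := fun ω => (hsharp ω δl).symm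
  refine ⟨?_, ?_, ?_, ?_⟩
  · intro ω X
    have e1 : P ω (δh X) = δh (sharpP ω) X := by
      rw [← hsharp ω (δh X)]; exact δhsymm X _
    have e2 : δh (sharpP ω) (sharpP (h X))
        = δh (sharpP ω) X - l X * δh n (sharpP ω) := by
      rw [F1, map_sub, map_smul, smul_eq_mul, δhsymm (sharpP ω) n]
    have e3 : P (h X) δl = δl X - l X * δl n := by
      rw [F4, F1, map_sub, map_smul, smul_eq_mul]
    have e4 : h X n = -(n2 * l X) := by
      rw [hsymm]; linarith [c4 X]
    have e5 := hδn ω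
    simp only [δP, e1, e2, e3, e4, e5]
    ring
  · intro ω
    have e2 : δh (sharpP ω) (sharpP l) = -l2 * δh n (sharpP ω) := by
      rw [F2, map_smul, smul_eq_mul, δhsymm (sharpP ω) n]
    have e3 : P l δl = -l2 * δl n := by
      rw [F4, F2, map_smul, smul_eq_mul]
    have e5 := hδn ω
    simp only [δP, e2, e3, e5]
    linear_combination (-(ω n * δl2) - P ω δl) * c3
  · have e5 := hδn l
    have e3 : P l δl = -l2 * δl n := by
      rw [F4, F2, map_smul, smul_eq_mul]
    have e2 : δh n (sharpP l) = -l2 * δh n n := by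
      rw [F2, map_smul, smul_eq_mul]
    simp only [δn2, e5, e3, e2]
    linear_combination (-(δl n) - n2 * δl2) * c3
  · intro X
    have e5 := hδn (h X)
    have e1 : h δn X = h X δn := hsymm δn X
    have e2 : δh n (sharpP (h X)) = δh n X - l X * δh n n := by
      rw [F1, map_sub, map_smul, smul_eq_mul]
    have e3 : P (h X) δl = δl X - l X * δl n := by
      rw [F4, F1, map_sub, map_smul, smul_eq_mul]
    have e4 : h X n = -(n2 * l X) := by
      rw [hsymm]; linarith [c4 X]
    simp only [δn2, e1, e5, e2, e3, e4]
    ring
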